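/- A delta-matroid M = (E, B) is even if and only if for all bases B1, B2 ∈ B and every element e ∈ B1 △ B2, there exists f ∈ (B1 △ B2) \ {e} such that B1 △ {e, f} ∈ B. -/

import Mathlib

open scoped symmDiff

/-- A delta-matroid: a finite ground set `E` and a nonempty family `B` of subsets of `E`
satisfying the symmetric exchange axiom. -/
structure DeltaMatroid (α : Type*) [DecidableEq α] where
  E : Finset α
  B : Finset (Finset α)
  nonempty : B.Nonempty
  subset_ground : ∀ S ∈ B, S ⊆ E
  exchange : ∀ B₁ ∈ B, ∀ B₂ ∈ B, ∀ e ∈ B₁ ∆ B₂,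
    ∃ f ∈ B₁ ∆ B₂, B₁ ∆ ({e, f} : Finset α) ∈ B

variable {α : Type*} [DecidableEq α]

/-- A delta-matroid is even if all bases have cardinalities of the same parity. -/
def DeltaMatroid.IsEven (M : DeltaMatroid α) : Prop :=
  ∀ B₁ ∈ M.B, ∀ B₂ ∈ M.B, B₁.card % 2 = B₂.card % 2

/-- `X` is a separator of `M` if `M` is the direct sum of its restrictions to `X`
and to `E \ X`; equivalently, bases can be freely recombined across `X`. -/
def DeltaMatroid.IsSeparator (M : DeltaMatroid α) (X : Finset α) : Prop :=
  X ⊆ M.E ∧ ∀ B₁ ∈ M.B, ∀ B₂ ∈ M.B, (B₁ ∩ X) ∪ (B₂ \ X) ∈ M.B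

/-- A component is a minimal nonempty separator. -/
def DeltaMatroid.IsComponent (M : DeltaMatroid α) (C : Finset α) : Prop :=
  M.IsSeparator C ∧ C.Nonempty ∧
    ∀ X, M.IsSeparator X → X.Nonempty → X ⊆ C → X = C

/-- The basis graph of a delta-matroid: vertices are the bases, two bases being
adjacent iff their symmetric difference has exactly two elements. -/
def DeltaMatroid.BG (M : DeltaMatroid α) : SimpleGraph ↥M.B where
  Adj S T := ((S : Finset α) ∆ (T : Finset α)).card = 2
  symm := by
    refine ⟨?_⟩
    intro S T h
    rwa [symmDiff_comm]
  loopless := by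
    refine ⟨?_⟩
    intro S h
    simp [symmDiff_self] at h

/-- The graph `G` has a cycle of length `k` through the edge `e`. -/
def CycleThroughEdge {V : Type*} (G : SimpleGraph V) (e : Sym2 V) (k : ℕ) : Prop :=
  ∃ (v : V) (c : G.Walk v v), c.IsCycle ∧ c.length = k ∧ e ∈ c.edges

/-- An edge is pancyclic if it lies in a cycle of every length `3 ≤ k ≤ n`. -/
def EdgePancyclic {V : Type*} [Fintype V] (G : SimpleGraph V) (e : Sym2 V) : Prop :=
  ∀ k, 3 ≤ k → k ≤ Fintype.card V → CycleThroughEdge G e k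

/-- An edge is almost pancyclic if it lies in a cycle of every length `4 ≤ k ≤ n`. -/
def EdgeAlmostPancyclic {V : Type*} [Fintype V] (G : SimpleGraph V) (e : Sym2 V) : Prop :=
  ∀ k, 4 ≤ k → k ≤ Fintype.card V → CycleThroughEdge G e k

/-- An edge is even pancyclic if it lies in a cycle of length `k` for every
`3 ≤ k ≤ n` with `k` even or `k = n`. -/
def EdgeEvenPancyclic {V : Type*} [Fintype V] (G : SimpleGraph V) (e : Sym2 V) : Prop :=
  ∀ k, 3 ≤ k → k ≤ Fintype.card V → (Even k ∨ k = Fintype.card V) →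
    CycleThroughEdge G e k

/-- The hypercube graph `Q_d`: vertices `{0,1}^d`, adjacent iff they differ in
exactly one coordinate. -/
def hypercube (d : ℕ) : SimpleGraph (Fin d → Bool) where
  Adj x y := ∃ i, x i ≠ y i ∧ ∀ j, j ≠ i → x j = y j
  symm := by
    refine ⟨?_⟩
    rintro x y ⟨i, h, hj⟩
    exact ⟨i, h.symm, fun j hne => (hj j hne).symm⟩
  loopless := by
    refine ⟨?_⟩
    rintro x ⟨i, h, -⟩
    exact h rfl

lemma card_symmDiff_aux (A B : Finset α) :
    (A ∆ B).card + 2 * (A ∩ B).card = A.card + B.card := by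
  have h1 : A ∆ B = (A \ B) ∪ (B \ A) := by
    ext x; simp [Finset.mem_symmDiff]
  have hd : Disjoint (A \ B) (B \ A) := by
    simp [Finset.disjoint_left]; tauto
  have h2 : (A ∆ B).card = (A \ B).card + (B \ A).card := by
    rw [h1, Finset.card_union_of_disjoint hd]
  have h3 : (A \ B).card + (A ∩ B).card = A.card :=
    Finset.card_sdiff_add_card_inter A B
  have h4 : (B \ A).card + (B ∩ A).card = B.card :=
    Finset.card_sdiff_add_card_inter B A
  rw [Finset.inter_comm B A] at h4
  omega

/-- A delta-matroid is even iff for all bases `B₁, B₂` and every `e ∈ B₁ ∆ B₂`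
there is `f ∈ (B₁ ∆ B₂) \\ {e}` with `B₁ ∆ {e, f}` a base. -/
theorem statement1 (M : DeltaMatroid α) :
    M.IsEven ↔
      ∀ B₁ ∈ M.B, ∀ B₂ ∈ M.B, ∀ e ∈ B₁ ∆ B₂,
        ∃ f ∈ (B₁ ∆ B₂).erase e, B₁ ∆ ({e, f} : Finset α) ∈ M.B := by
  constructor
  · intro heven B₁ hB₁ B₂ hB₂ e he
    obtain ⟨f, hf, hB₃⟩ := M.exchange B₁ hB₁ B₂ hB₂ e he
    by_cases hfe : f = e
    · exfalso
      subst hfe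
      have hpair : ({f, f} : Finset α) = {f} := by simp
      rw [hpair] at hB₃
      have hp := heven _ hB₃ B₁ hB₁
      have hc := card_symmDiff_aux B₁ {f}
      simp only [Finset.card_singleton] at hc
      have hle : (B₁ ∩ {f}).card ≤ 1 := by
        calc (B₁ ∩ {f}).card ≤ ({f} : Finset α).card :=
          Finset.card_le_card (Finset.inter_subset_right)
        _ = 1 := Finset.card_singleton f
      omega
    · exact ⟨f, Finset.mem_erase.mpr ⟨hfe, hf⟩, hB₃⟩
  · intro h B₁ hB₁ B₂ hB₂
    suffices H : ∀ n B₁ B₂, B₁ ∈ M.B → B₂ ∈ M.B → (B₁ ∆ B₂).card = n →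
        B₁.card % 2 = B₂.card % 2 by
      exact H _ B₁ B₂ hB₁ hB₂ rfl
    clear hB₁ hB₂ B₁ B₂
    intro n
    induction n using Nat.strong_induction_on with
    | _ n ih =>
      intro B₁ B₂ hB₁ hB₂ hn
      rcases Nat.eq_zero_or_pos n with h0 | hpos
      · subst h0
        have : B₁ ∆ B₂ = ∅ := Finset.card_eq_zero.mp hn
        rw [Finset.symmDiff_eq_empty.mp this]
      · have hne : (B₁ ∆ B₂).Nonempty := Finset.card_pos.mp (hn ▸ hpos)
        obtain ⟨e, he⟩ := hne
        obtain ⟨f, hf, hB₃⟩ := h B₁ hB₁ B₂ hB₂ e he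
        rw [Finset.mem_erase] at hf
        obtain ⟨hfe, hfmem⟩ := hf
        have hpair : ({e, f} : Finset α).card = 2 := Finset.card_pair (Ne.symm hfe)
        have hsub : ({e, f} : Finset α) ⊆ B₁ ∆ B₂ := by
          intro x hx
          rcases Finset.mem_insert.mp hx with rfl | hx
          · exact he
          · rw [Finset.mem_singleton.mp hx]; exact hfmem
        have hkey : (B₁ ∆ ({e, f} : Finset α)) ∆ B₂ = (B₁ ∆ B₂) \ ({e, f} : Finset α) := by
          rw [symmDiff_comm B₁ ({e, f} : Finset α), symmDiff_assoc,
            symmDiff_comm ({e, f} : Finset α) (B₁ ∆ B₂), symmDiff_of_ge hsub]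
        have hcard : ((B₁ ∆ ({e, f} : Finset α)) ∆ B₂).card = n - 2 := by
          rw [hkey, Finset.card_sdiff_of_subset hsub, hpair, hn]
        have hlt : n - 2 < n := by omega
        have hp2 := ih (n - 2) hlt _ _ hB₃ hB₂ hcard
        have hc := card_symmDiff_aux B₁ ({e, f} : Finset α)
        rw [hpair] at hc
        have hle : (B₁ ∩ ({e, f} : Finset α)).card ≤ 2 := by
          calc (B₁ ∩ ({e, f} : Finset α)).card ≤ ({e, f} : Finset α).card :=
            Finset.card_le_card Finset.inter_subset_right
          _ = 2 := hpair
        omega
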